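/- arXiv:1204.3485 — 9 statements merged into one kernel-verified Lean document; each statement's English description precedes it below -/
import Mathlib

section
/- Every surjective continuous function f : X → Y between compact Polish spaces has a Borel section, i.e., there exists a Borel function g : Y → X with f ∘ g = id_Y. -/
open Set

/-- Auxiliary: for a continuous map `F` from a compact space and a continuous real
function `u`, the fiberwise infimum of `u` is Borel measurable. -/
lemma infFiber_measurable {X Z : Type*} [TopologicalSpace X] [CompactSpace X]
    [TopologicalSpace Z] [T2Space Z] [MeasurableSpace Z] [OpensMeasurableSpace Z]
    {F : X → Z} (hF : Continuous F) {u : X → ℝ} (hu : Continuous u) :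
    Measurable (fun z => sInf (u '' (F ⁻¹' {z}))) := by
  apply measurable_of_Iic
  intro t
  have hkey : ∀ z : Z, (sInf (u '' (F ⁻¹' {z})) ≤ t ↔
      (z ∈ F '' {x | u x ≤ t} ∨ (z ∉ range F ∧ (0:ℝ) ≤ t))) := by
    intro z
    by_cases hz : z ∈ range F
    · have hfib : IsCompact (F ⁻¹' {z}) := (isClosed_singleton.preimage hF).isCompact
      have hne : (F ⁻¹' {z}).Nonempty := hz
      obtain ⟨x₀, hx₀, hmin⟩ := hfib.exists_isMinOn hne hu.continuousOn
      have hleast : IsLeast (u '' (F ⁻¹' {z})) (u x₀) :=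
        ⟨mem_image_of_mem _ hx₀, by rintro b ⟨x, hx, rfl⟩; exact hmin hx⟩
      rw [hleast.csInf_eq]
      constructor
      · intro h; exact Or.inl ⟨x₀, h, hx₀⟩
      · rintro (⟨x, hx, rfl'⟩ | ⟨hznr, _⟩)
        · exact le_trans (hleast.2 (mem_image_of_mem _ rfl')) hx
        · exact absurd hz hznr
    · have : F ⁻¹' {z} = ∅ := by
        ext x; simp only [mem_preimage, mem_singleton_iff, mem_empty_iff_false, iff_false]
        exact fun h => hz ⟨x, h⟩
      rw [this, image_empty, Real.sInf_empty]
      constructor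
      · intro h; exact Or.inr ⟨hz, h⟩
      · rintro (⟨x, _, rfl⟩ | ⟨_, h⟩)
        · exact absurd ⟨x, rfl⟩ hz
        · exact h
  have : (fun z => sInf (u '' (F ⁻¹' {z}))) ⁻¹' Iic t =
      (F '' {x | u x ≤ t}) ∪ ((range F)ᶜ ∩ (if (0:ℝ) ≤ t then univ else ∅)) := by
    ext z
    simp only [mem_preimage, mem_Iic, hkey z, mem_union, mem_inter_iff, mem_compl_iff]
    by_cases h0 : (0:ℝ) ≤ t <;> simp [h0]
  rw [this]
  apply MeasurableSet.union
  · exact (((isClosed_Iic.preimage hu).isCompact.image hF).isClosed).measurableSet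
  · apply MeasurableSet.inter
    · exact ((isCompact_range hF).isClosed).measurableSet.compl
    · split <;> simp
/-- Every surjective continuous function between compact Polish spaces
has a Borel section. -/
theorem stmt1 {X Y : Type*} [TopologicalSpace X] [PolishSpace X] [CompactSpace X]
    [MeasurableSpace X] [BorelSpace X]
    [TopologicalSpace Y] [PolishSpace Y] [CompactSpace Y]
    [MeasurableSpace Y] [BorelSpace Y]
    (f : X → Y) (hf : Continuous f) (hsurj : Function.Surjective f) :
    ∃ g : Y → X, Measurable g ∧ f ∘ g = id := by
  by_cases hX : Nonempty X
  · letI := TopologicalSpace.upgradeIsCompletelyMetrizable X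
    obtain ⟨u, hu⟩ := TopologicalSpace.exists_dense_seq X
    set e : ℕ → X → ℝ := fun n x => dist x (u n) with he
    have hecont : ∀ n, Continuous (e n) := fun n => continuous_id.dist continuous_const
    -- separating: equal distances to all u n forces equality
    have hsep : ∀ x x' : X, (∀ n, e n x = e n x') → x = x' := by
      intro x x' h
      by_contra hne
      have hpos : 0 < dist x x' := dist_pos.mpr hne
      obtain ⟨n, hn⟩ := hu.exists_dist_lt x (half_pos hpos)
      have : dist x x' ≤ dist x (u n) + dist x' (u n) := dist_triangle_right x x' (u n)
      rw [show dist x' (u n) = e n x' from rfl, ← h n] at this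
      simp only [he] at this hn
      linarith
    -- the nested compact sets
    let K : ℕ → Y → Set X := fun n => Nat.rec (fun y => f ⁻¹' {y})
      (fun n Kn y => {x ∈ Kn y | e n x = sInf (e n '' Kn y)}) n
    set r : ℕ → Y → ℝ := fun n y => sInf (e n '' K n y) with hr
    have hK0 : ∀ y, K 0 y = f ⁻¹' {y} := fun _ => rfl
    have hKs : ∀ n y, K (n+1) y = {x ∈ K n y | e n x = r n y} := fun _ _ => rfl
    have hcompne : ∀ n y, IsCompact (K n y) ∧ (K n y).Nonempty := by
      intro n
      induction n with
      | zero =>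
        intro y
        exact ⟨(isClosed_singleton.preimage hf).isCompact, hsurj y⟩
      | succ n ih =>
        intro y
        obtain ⟨hc, hne⟩ := ih y
        obtain ⟨x₀, hx₀, hmin⟩ := hc.exists_isMinOn hne (hecont n).continuousOn
        have hleast : IsLeast (e n '' K n y) (e n x₀) :=
          ⟨mem_image_of_mem _ hx₀, by rintro b ⟨x, hx, rfl⟩; exact hmin hx⟩
        have hx₀r : e n x₀ = r n y := (hleast.csInf_eq).symm
        constructor
        · have : K (n+1) y = K n y ∩ (e n) ⁻¹' {r n y} := by
            rw [hKs]; ext x; simp [Set.mem_sep_iff]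
          rw [this]
          exact hc.inter_right (isClosed_singleton.preimage (hecont n))
        · exact ⟨x₀, hx₀, hx₀r⟩
    have hmono : ∀ n y, K (n+1) y ⊆ K n y := by
      intro n y x hx; rw [hKs] at hx; exact hx.1
    have hKchar : ∀ n y, K n y = {x | f x = y ∧ ∀ i < n, e i x = r i y} := by
      intro n
      induction n with
      | zero => intro y; ext x; simp [hK0]
      | succ n ih =>
        intro y
        rw [hKs, ih y]
        ext x
        simp only [mem_sep_iff, mem_setOf_eq]
        constructor
        · rintro ⟨⟨hfx, hall⟩, hn⟩
          refine ⟨hfx, fun i hi => ?_⟩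
          rcases Nat.lt_succ_iff_lt_or_eq.mp hi with h | h
          · exact hall i h
          · subst h; exact hn
        · rintro ⟨hfx, hall⟩
          exact ⟨⟨hfx, fun i hi => hall i (hi.trans (Nat.lt_succ_self n))⟩,
            hall n (Nat.lt_succ_self n)⟩
    have hinter : ∀ y, (⋂ n, K n y).Nonempty := by
      intro y
      apply IsCompact.nonempty_iInter_of_sequence_nonempty_isCompact_isClosed
      · exact fun n => hmono n y
      · exact fun n => (hcompne n y).2
      · exact (hcompne 0 y).1
      · exact fun n => (hcompne n y).1.isClosed
    choose g hg using hinter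
    have hgK : ∀ y n, g y ∈ K n y := fun y n => Set.mem_iInter.mp (hg y) n
    have hgf : ∀ y, f (g y) = y := fun y => hgK y 0
    have hge : ∀ y n, e n (g y) = r n y := by
      intro y n
      have := hgK y (n+1)
      rw [hKs] at this
      exact this.2
    -- measurability of the r n
    have hrmeas : ∀ n, Measurable (r n) := by
      intro n
      induction n using Nat.strong_induction_on with
      | _ n IH =>
        have hF : Continuous (fun x => ((f x, fun i : Fin n => e i x) : Y × (Fin n → ℝ))) :=
          hf.prodMk (continuous_pi fun i => hecont i)
        have hm := infFiber_measurable hF (hecont n)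
        have hrewrite : r n = fun y => sInf (e n ''
            ((fun x => ((f x, fun i : Fin n => e i x) : Y × (Fin n → ℝ))) ⁻¹'
              {(y, fun i : Fin n => r i y)})) := by
          funext y
          have : K n y = (fun x => ((f x, fun i : Fin n => e i x) : Y × (Fin n → ℝ))) ⁻¹'
              {(y, fun i : Fin n => r i y)} := by
            rw [hKchar n y]
            ext x
            simp only [mem_setOf_eq, mem_preimage, mem_singleton_iff, Prod.mk.injEq,
              funext_iff]
            constructor
            · rintro ⟨hfx, hall⟩
              exact ⟨hfx, fun i => hall i i.2⟩
            · rintro ⟨hfx, hall⟩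
              exact ⟨hfx, fun i hi => hall ⟨i, hi⟩⟩
          rw [hr]
          simp only
          rw [this]
        rw [hrewrite]
        exact hm.comp (measurable_id.prodMk
          (measurable_pi_lambda _ fun i => IH i i.2))
    -- g is measurable via the closed embedding x ↦ (e n x)_n
    have hE : Continuous (fun x => (fun n => e n x : ℕ → ℝ)) :=
      continuous_pi fun n => hecont n
    have hEinj : Function.Injective (fun x => (fun n => e n x : ℕ → ℝ)) := by
      intro x x' h
      exact hsep x x' (fun n => congrFun h n)
    have hEemb : MeasurableEmbedding (fun x => (fun n => e n x : ℕ → ℝ)) :=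
      (hE.isClosedEmbedding hEinj).measurableEmbedding
    have hgmeas : Measurable g := by
      rw [← hEemb.measurable_comp_iff]
      have : (fun x => (fun n => e n x : ℕ → ℝ)) ∘ g = fun y => (fun n => r n y) :=
        funext fun y => funext fun n => hge y n
      rw [this]
      exact measurable_pi_lambda _ fun n => hrmeas n
    exact ⟨g, hgmeas, funext fun y => hgf y⟩
  · rw [not_nonempty_iff] at hX
    have hY : IsEmpty Y := ⟨fun y => hX.false (hsurj y).choose⟩
    refine ⟨fun y => hY.elim y, measurable_of_empty _, funext fun y => hY.elim y⟩
end

section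
/- Let ρ : ℕ → ℕ be a function such that ρ⁻¹(n) is infinite for every n. Then the continuous map f : ℝ^ℕ → (S¹)^ℕ given by f((t_m)_m) = (exp(2πi · t_{ρ(n)}/n))_n is a Borel (indeed continuous) reduction of the equivalence relation ℓ∞ (where x ℓ∞ y iff sup_m |x(m) − y(m)| < ∞) to the equivalence relation E on (S¹)^ℕ given by (x_n) E (y_n) iff there exists k such that for all n ≥ 1 the arc distance between x_n and y_n is at most 2πk/n. -/
open scoped Real

instance : Fact (0 < 2 * π) := ⟨by positivity⟩

lemma distAC (a b : ℝ) :
    dist ((a : ℝ) : AddCircle (2 * π)) ((b : ℝ) : AddCircle (2 * π))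
      = ‖((a - b : ℝ) : AddCircle (2 * π))‖ := by
  rw [dist_eq_norm, ← QuotientAddGroup.mk_sub]

lemma normAC_le (a : ℝ) : ‖((a : ℝ) : AddCircle (2 * π))‖ ≤ |a| := by
  simpa using QuotientAddGroup.norm_mk_le_norm (S := AddSubgroup.zmultiples (2 * π)) (m := a)

lemma normAC_eq (a : ℝ) (h : |a| ≤ π) : ‖((a : ℝ) : AddCircle (2 * π))‖ = |a| := by
  rw [AddCircle.norm_coe_eq_abs_iff (2 * π) (by positivity)]
  rw [abs_of_pos (by positivity : (0:ℝ) < 2 * π)]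
  linarith

/-- If ρ : ℕ → ℕ has all fibers infinite, then the continuous map
f((t_m)_m) = (exp(2πi t_{ρ(n)}/n))_n (the circle modeled as ℝ/2πℤ, so the n-th
coordinate is the class of 2π t_{ρ(n)}/n) is a continuous reduction of ℓ∞ to the
relation E on (S¹)^ℕ given by ∃ k, ∀ n ≥ 1, arc-dist(x_n, y_n) ≤ 2πk/n. -/
theorem stmt4 (ρ : ℕ → ℕ) (hρ : ∀ n, (ρ ⁻¹' {n}).Infinite) :
    Continuous (fun (t : ℕ → ℝ) (n : ℕ) => ((2 * π * t (ρ n) / n : ℝ) : AddCircle (2 * π))) ∧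
    ∀ x y : ℕ → ℝ,
      (∃ k : ℝ, ∀ m, |x m - y m| ≤ k) ↔
      ∃ k : ℕ, ∀ n : ℕ, 1 ≤ n →
        dist ((2 * π * x (ρ n) / n : ℝ) : AddCircle (2 * π))
             ((2 * π * y (ρ n) / n : ℝ) : AddCircle (2 * π)) ≤ 2 * π * k / n := by
  have hπ : (0:ℝ) < π := Real.pi_pos
  constructor
  · apply continuous_pi
    intro n
    exact (AddCircle.continuous_mk' (2 * π)).comp
      (((continuous_const.mul (continuous_apply (ρ n))).div_const _))
  · intro x y
    constructor
    · rintro ⟨k, hk⟩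
      refine ⟨⌈k⌉₊, fun n hn => ?_⟩
      have hn' : (0:ℝ) < n := by exact_mod_cast hn
      rw [distAC]
      calc ‖((2 * π * x (ρ n) / n - 2 * π * y (ρ n) / n : ℝ) : AddCircle (2 * π))‖
          ≤ |2 * π * x (ρ n) / n - 2 * π * y (ρ n) / n| := normAC_le _
        _ = 2 * π * |x (ρ n) - y (ρ n)| / n := by
            rw [div_sub_div_same, ← mul_sub, abs_div, abs_mul,
              abs_of_pos (by positivity : (0:ℝ) < 2 * π), abs_of_pos hn']
        _ ≤ 2 * π * (⌈k⌉₊ : ℝ) / n := by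
            gcongr
            exact (hk (ρ n)).trans (Nat.le_ceil k)
    · rintro ⟨k, hk⟩
      refine ⟨k, fun m => ?_⟩
      obtain ⟨n, hn, hnlt⟩ := (hρ m).exists_gt (⌈2 * |x m - y m|⌉₊ + 1)
      have hn1 : 1 ≤ n := by omega
      have hn' : (0:ℝ) < n := by exact_mod_cast hn1
      have hsmall : 2 * |x m - y m| ≤ n := by
        have h1 : 2 * |x m - y m| ≤ (⌈2 * |x m - y m|⌉₊ : ℝ) := Nat.le_ceil _
        have h2 : (⌈2 * |x m - y m|⌉₊ : ℝ) ≤ n := by exact_mod_cast (by omega : ⌈2 * |x m - y m|⌉₊ ≤ n)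
        linarith
      have hd := hk n hn1
      rw [Set.mem_preimage, Set.mem_singleton_iff] at hn
      rw [hn, distAC] at hd
      have habs : |2 * π * x m / n - 2 * π * y m / n| = 2 * π * |x m - y m| / n := by
        rw [div_sub_div_same, ← mul_sub, abs_div, abs_mul,
          abs_of_pos (by positivity : (0:ℝ) < 2 * π), abs_of_pos hn']
      have hle : |2 * π * x m / n - 2 * π * y m / n| ≤ π := by
        rw [habs, div_le_iff₀ hn']
        nlinarith [abs_nonneg (x m - y m)]
      rw [normAC_eq _ hle, habs, div_le_div_iff₀ hn' hn'] at hd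
      have h3 := (mul_le_mul_iff_left₀ hn').mp hd
      have h4 := (mul_le_mul_iff_right₀ (by positivity : (0:ℝ) < 2 * π)).mp h3
      exact_mod_cast h4
end

section
/- Let G be a compact Polish topological group and H a subgroup of G that is a K_σ subset. If the coset equivalence relation E_H = {(x,y) ∈ G × G : x·y⁻¹ ∈ H} is non-meager in G × G, then H is an open (hence also closed) subgroup of G. -/
/-- In a compact Polish group, a K_σ subgroup whose coset equivalence
relation is non-meager in G × G is open (hence also closed). -/
theorem stmt5 {G : Type*} [Group G] [TopologicalSpace G] [IsTopologicalGroup G]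
    [CompactSpace G] [PolishSpace G] (H : Subgroup G)
    (hKσ : ∃ C : ℕ → Set G, (∀ n, IsCompact (C n)) ∧ (H : Set G) = ⋃ n, C n)
    (hnm : ¬ IsMeagre {p : G × G | p.1 * p.2⁻¹ ∈ H}) :
    IsOpen (H : Set G) ∧ IsClosed (H : Set G) := by
  obtain ⟨C, hCcompact, hCunion⟩ := hKσ
  -- the map φ(x,y) = x * y⁻¹ is continuous and open
  set φ : G × G → G := fun p => p.1 * p.2⁻¹ with hφdef
  have hφcont : Continuous φ := continuous_fst.mul continuous_snd.inv
  have hφopen : IsOpenMap φ := by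
    let e : G × G ≃ₜ G × G :=
      { toFun := fun p => (p.1 * p.2⁻¹, p.2)
        invFun := fun p => (p.1 * p.2, p.2)
        left_inv := fun p => by simp
        right_inv := fun p => by simp
        continuous_toFun := (continuous_fst.mul continuous_snd.inv).prodMk continuous_snd
        continuous_invFun := (continuous_fst.mul continuous_snd).prodMk continuous_snd }
    exact isOpenMap_fst.comp e.isOpenMap
  -- some C n has nonempty interior
  have hint : ∃ n, (interior (C n)).Nonempty := by
    by_contra hno
    push_neg at hno
    apply hnm
    have hE : {p : G × G | p.1 * p.2⁻¹ ∈ H} = ⋃ n, φ ⁻¹' (C n) := by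
      ext p
      simp only [Set.mem_setOf_eq, Set.mem_iUnion, Set.mem_preimage, hφdef]
      rw [← SetLike.mem_coe, hCunion, Set.mem_iUnion]
    rw [hE]
    apply isMeagre_iUnion
    intro n
    have hclosed : IsClosed (φ ⁻¹' C n) := ((hCcompact n).isClosed).preimage hφcont
    have hnd : IsNowhereDense (φ ⁻¹' C n) := by
      rw [hclosed.isNowhereDense_iff]
      by_contra hne
      obtain ⟨p, hp⟩ := Set.nonempty_iff_ne_empty.mpr hne
      have : φ p ∈ interior (C n) := by
        have himg : φ '' interior (φ ⁻¹' C n) ⊆ C n := by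
          intro x ⟨q, hq, hqx⟩
          exact hqx ▸ (interior_subset hq : q ∈ φ ⁻¹' C n)
        exact interior_maximal himg (hφopen _ isOpen_interior) ⟨p, hp, rfl⟩
      rw [hno n] at this
      exact this
    exact isMeagre_iff_countable_union_isNowhereDense.mpr
      ⟨{φ ⁻¹' C n}, by simpa using hnd, Set.countable_singleton _, by simp⟩
  obtain ⟨n, x, hx⟩ := hint
  have hxH : (H : Set G) ∈ nhds x := by
    apply Filter.mem_of_superset (mem_interior_iff_mem_nhds.mp hx)
    intro y hy
    show y ∈ (H : Set G)
    rw [hCunion]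
    exact Set.mem_iUnion.mpr ⟨n, hy⟩
  have hopen := Subgroup.isOpen_of_mem_nhds H hxH
  exact ⟨hopen, H.isClosed_of_isOpen hopen⟩
end

section
/- Let G be a Polish group acting continuously by homeomorphisms on a Polish space X, with orbit equivalence relation E_a. Suppose some orbit is dense in X and E_a is meager in X × X. Then E₀ is Borel reducible to E_a, where E₀ is the equivalence relation on 2^ℕ defined by x E₀ y iff x(m) = y(m) for all but finitely many m. -/
open Set Metric Filter Topology Pointwise MulAction

section BKAux

variable {Y Z ι : Type*} [TopologicalSpace Y] [TopologicalSpace Z]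

lemma bk_interior_union_empty {A B : Set Y} (hA : IsClosed A) (hiA : interior A = ∅)
    (hiB : interior B = ∅) : interior (A ∪ B) = ∅ := by
  have h1 : interior (A ∪ B) \ A ⊆ interior B :=
    interior_maximal (fun z hz => (interior_subset hz.1).resolve_left hz.2)
      (isOpen_interior.sdiff hA)
  have h2 : interior (A ∪ B) ⊆ A := by
    intro z hz
    by_contra hzA
    have := h1 ⟨hz, hzA⟩
    rw [hiB] at this
    exact this
  have h3 : interior (A ∪ B) ⊆ interior A := interior_maximal h2 isOpen_interior
  rw [hiA] at h3
  exact eq_empty_of_subset_empty h3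

lemma bk_biUnion_closed_int_empty (s : Finset ι) (f : ι → Set Y)
    (hc : ∀ i, IsClosed (f i)) (hi : ∀ i, interior (f i) = ∅) :
    IsClosed (⋃ i ∈ s, f i) ∧ interior (⋃ i ∈ s, f i) = ∅ := by
  classical
  induction s using Finset.induction_on with
  | empty => simp
  | @insert a s ha ih =>
      rw [Finset.set_biUnion_insert]
      exact ⟨(hc a).union ih.1, bk_interior_union_empty (hc a) (hi a) ih.2⟩

lemma bk_preimage_interior_empty {φ : Y → Z} (hφo : IsOpenMap φ) {F : Set Z}
    (hF : interior F = ∅) : interior (φ ⁻¹' F) = ∅ := by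
  have h : φ '' interior (φ ⁻¹' F) ⊆ interior F :=
    interior_maximal ((image_mono interior_subset).trans (image_preimage_subset φ F))
      (hφo _ isOpen_interior)
  rw [hF] at h
  have := image_eq_empty.mp (subset_empty_iff.mp h)
  exact this

lemma bk_depChoice {α : Type*} (inv : ℕ → α → Prop) (R : ℕ → α → α → Prop) (a0 : α)
    (h0 : inv 0 a0) (hstep : ∀ n a, inv n a → ∃ b, inv (n + 1) b ∧ R n a b) :
    ∃ f : ℕ → α, f 0 = a0 ∧ (∀ n, inv n (f n)) ∧ ∀ n, R n (f n) (f (n + 1)) := by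
  choose next hnext1 hnext2 using hstep
  let F : ∀ _ : ℕ, {a : α // inv _ a} := fun n =>
    Nat.rec (motive := fun n => {a : α // inv n a}) ⟨a0, h0⟩
      (fun n p => ⟨next n p.1 p.2, hnext1 n p.1 p.2⟩) n
  exact ⟨fun n => (F n).1, rfl, fun n => (F n).2, fun n => hnext2 n (F n).1 (F n).2⟩

lemma bk_evBall {Y Z : Type*} [MetricSpace Y] [TopologicalSpace Z] {u : Y → Z}
    (hu : Continuous u) {p : Y} {O : Set Z} (hO : IsOpen O) (hp : u p ∈ O) :
    ∀ᶠ r in 𝓝[>] (0 : ℝ), ∀ v ∈ Metric.closedBall p r, u v ∈ O := by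
  obtain ⟨δ, hδ, hball⟩ := Metric.isOpen_iff.mp (hO.preimage hu) p hp
  filter_upwards [Ioo_mem_nhdsGT_of_mem ⟨le_refl (0 : ℝ), hδ⟩] with r hr v hv
  exact hball (lt_of_le_of_lt hv hr.2)

end BKAux

section BKMain

variable {G X : Type*} [Group G] [MulAction G X]

/-- The key one-step construction: inside a nonempty open set `V`, find a group element `g`
and a small open set `V'` such that `V'` and `g • V'` sit inside `V` with closures, all
translates by elements of `S` (possibly composed with `g`) have small diameter, and all
pairs of `S`-translates of `V'` and `S·g`-translates of `V'` avoid the closed nowhere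
dense set `Fn`. -/
lemma bk_step [MetricSpace X] [ContinuousConstSMul G X]
    (x₀ : X) (hx₀ : Dense (MulAction.orbit G x₀))
    (Fn : Set (X × X)) (hFc : IsClosed Fn) (hFi : interior Fn = ∅)
    (V : Set X) (hVo : IsOpen V) (hVne : V.Nonempty)
    (S : Finset G) (ε : ℝ) (hε : 0 < ε) :
    ∃ (g : G) (V' : Set X), IsOpen V' ∧ V'.Nonempty ∧ closure V' ⊆ V ∧
      closure (g • V') ⊆ V ∧
      (∀ a ∈ S, ∀ i : Bool, ∀ v ∈ closure V', ∀ w ∈ closure V',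
        dist ((a * (if i then g else 1)) • v) ((a * (if i then g else 1)) • w) ≤ ε) ∧
      (∀ a ∈ S, ∀ b ∈ S, ∀ v ∈ closure V', ∀ w ∈ closure V',
        (a • v, b • g • w) ∉ Fn) := by
  classical
  set φ : G × G → X × X → X × X := fun q p => (q.1 • p.1, q.2 • p.2) with hφ
  have hφc : ∀ q : G × G, Continuous (φ q) := fun q =>
    ((continuous_const_smul q.1).comp continuous_fst).prodMk
      ((continuous_const_smul q.2).comp continuous_snd)
  have hφo : ∀ q : G × G, IsOpenMap (φ q) := by
    intro q
    have : φ q = Prod.map (fun v : X => q.1 • v) (fun v : X => q.2 • v) := rfl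
    rw [this]
    exact (isOpenMap_smul q.1).prodMap (isOpenMap_smul q.2)
  set Bad : Set (X × X) := ⋃ q ∈ S ×ˢ S, φ q ⁻¹' Fn with hBad
  obtain ⟨hBadc, hBadi⟩ := bk_biUnion_closed_int_empty (S ×ˢ S) (fun q => φ q ⁻¹' Fn)
    (fun q => hFc.preimage (hφc q)) (fun q => bk_preimage_interior_empty (hφo q) hFi)
  -- find a point of (V ×ˢ V) \ Bad
  have hWne : ((V ×ˢ V) \ Bad).Nonempty := by
    by_contra h
    rw [Set.not_nonempty_iff_eq_empty, diff_eq_empty] at h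
    have h2 : V ×ˢ V ⊆ interior Bad := interior_maximal h (hVo.prod hVo)
    rw [hBadi] at h2
    obtain ⟨v, hv⟩ := hVne
    exact h2 (Set.mk_mem_prod hv hv)
  obtain ⟨⟨p₁, q₁⟩, hpq⟩ := hWne
  have hOopen : IsOpen ((V ×ˢ V) \ Bad) := (hVo.prod hVo).sdiff hBadc
  obtain ⟨A, B, hAo, hBo, hp₁, hq₁, hAB⟩ := isOpen_prod_iff.mp hOopen p₁ q₁ hpq
  obtain ⟨z₁, hz₁orb, hz₁A⟩ := hx₀.exists_mem_open hAo ⟨p₁, hp₁⟩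
  obtain ⟨g₁, hg₁⟩ := MulAction.mem_orbit_iff.mp hz₁orb
  obtain ⟨z₂, hz₂orb, hz₂B⟩ := hx₀.exists_mem_open hBo ⟨q₁, hq₁⟩
  obtain ⟨g₂, hg₂⟩ := MulAction.mem_orbit_iff.mp hz₂orb
  set g : G := g₂ * g₁⁻¹ with hgdef
  set p : X := g₁ • x₀ with hpdef
  have hgp : g • p = g₂ • x₀ := by
    rw [hgdef, hpdef, smul_smul, inv_mul_cancel_right]
  have hpA : p ∈ A := by rw [hg₁]; exact hz₁A
  have hgpB : g • p ∈ B := by rw [hgp, hg₂]; exact hz₂B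
  have hkey : (p, g • p) ∈ (V ×ˢ V) \ Bad := hAB ⟨hpA, hgpB⟩
  have hpV : p ∈ V := hkey.1.1
  have hgpV : g • p ∈ V := hkey.1.2
  have hnotF : ∀ a ∈ S, ∀ b ∈ S, (a • p, b • g • p) ∉ Fn := by
    intro a ha b hb hmem
    exact hkey.2 (Set.mem_biUnion (Finset.mem_product.mpr ⟨ha, hb⟩)
      (show φ (a, b) (p, g • p) ∈ Fn from hmem))
  -- eventually conditions on the radius
  have E1 : ∀ᶠ r in 𝓝[>] (0 : ℝ), ∀ v ∈ Metric.closedBall p r, v ∈ V :=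
    bk_evBall continuous_id hVo hpV
  have E2 : ∀ᶠ r in 𝓝[>] (0 : ℝ), ∀ v ∈ Metric.closedBall p r, g • v ∈ V :=
    bk_evBall (continuous_const_smul g) hVo hgpV
  have E3 : ∀ᶠ r in 𝓝[>] (0 : ℝ), ∀ a ∈ S, ∀ i : Bool,
      ∀ v ∈ Metric.closedBall p r,
        (a * (if i then g else 1)) • v ∈
          Metric.ball ((a * (if i then g else 1)) • p) (ε / 2) := by
    rw [eventually_all_finset]
    intro a _
    rw [eventually_all]
    intro i
    exact bk_evBall (continuous_const_smul _) isOpen_ball (mem_ball_self (half_pos hε))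
  have E4 : ∀ᶠ r in 𝓝[>] (0 : ℝ), ∀ a ∈ S, ∀ b ∈ S,
      ∀ z ∈ Metric.closedBall (p, p) r,
        (a • z.1, b • g • z.2) ∉ Fn := by
    rw [eventually_all_finset]
    intro a ha
    rw [eventually_all_finset]
    intro b hb
    have hcont2 : Continuous fun z : X × X => (a • z.1, b • g • z.2) :=
      ((continuous_const_smul a).comp continuous_fst).prodMk
        ((continuous_const_smul b).comp ((continuous_const_smul g).comp continuous_snd))
    exact bk_evBall hcont2 hFc.isOpen_compl (hnotF a ha b hb)
  obtain ⟨r, ⟨⟨⟨h1, h2⟩, h3⟩, h4⟩, hrpos⟩ :=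
    ((((E1.and E2).and E3).and E4).and eventually_mem_nhdsWithin).exists
  have hrpos' : (0 : ℝ) < r := hrpos
  have hcb : closure (Metric.ball p r) ⊆ Metric.closedBall p r :=
    closure_ball_subset_closedBall
  refine ⟨g, Metric.ball p r, isOpen_ball, ⟨p, mem_ball_self hrpos'⟩, ?_, ?_, ?_, ?_⟩
  · exact fun v hv => h1 v (hcb hv)
  · intro z hz
    rw [closure_smul] at hz
    obtain ⟨v, hv, rfl⟩ := hz
    exact h2 v (hcb hv)
  · intro a ha i v hv w hw
    have h3v := h3 a ha i v (hcb hv)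
    have h3w := h3 a ha i w (hcb hw)
    rw [mem_ball] at h3v h3w
    calc dist ((a * (if i then g else 1)) • v) ((a * (if i then g else 1)) • w)
        ≤ dist ((a * (if i then g else 1)) • v) ((a * (if i then g else 1)) • p) +
          dist ((a * (if i then g else 1)) • p) ((a * (if i then g else 1)) • w) :=
          dist_triangle _ _ _
      _ ≤ ε / 2 + ε / 2 := by
          refine add_le_add h3v.le ?_
          rw [dist_comm]
          exact h3w.le
      _ = ε := by ring
  · intro a ha b hb v hv w hw
    have hz : (v, w) ∈ Metric.closedBall (p, p) r := by
      rw [Metric.mem_closedBall, Prod.dist_eq]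
      exact max_le (hcb hv) (hcb hw)
    exact h4 a ha b hb (v, w) hz

/-- The core construction: a continuous reduction of `E₀` to the orbit equivalence
relation, given a dense orbit and a covering of the orbit equivalence relation by an
increasing sequence of symmetric closed sets with empty interior. -/
lemma bk_key [MetricSpace X] [CompleteSpace X] [ContinuousConstSMul G X]
    (x₀ : X) (hx₀ : Dense (MulAction.orbit G x₀))
    (F : ℕ → Set (X × X)) (hFc : ∀ n, IsClosed (F n)) (hFi : ∀ n, interior (F n) = ∅)
    (hFsym : ∀ n, ∀ p ∈ F n, Prod.swap p ∈ F n) (hFmono : Monotone F)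
    (hEF : ∀ p : X × X, (∃ g : G, g • p.1 = p.2) → ∃ n, p ∈ F n) :
    ∃ f : (ℕ → Bool) → X, Continuous f ∧
      ∀ x y : ℕ → Bool, (∃ n, ∀ m ≥ n, x m = y m) ↔ ∃ g : G, g • f x = f y := by
  classical
  haveI : Nonempty X := ⟨x₀⟩
  let inv : ℕ → Set X × ((ℕ → Bool) → G) × G → Prop := fun n s =>
    IsOpen s.1 ∧ s.1.Nonempty ∧ ∀ x y : ℕ → Bool, (∀ i < n, x i = y i) → s.2.1 x = s.2.1 y
  let R : ℕ → Set X × ((ℕ → Bool) → G) × G → Set X × ((ℕ → Bool) → G) × G → Prop :=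
    fun n s s' =>
    (∀ x, s'.2.1 x = s.2.1 x * (if x n then s'.2.2 else 1)) ∧
    closure s'.1 ⊆ s.1 ∧
    closure (s'.2.2 • s'.1) ⊆ s.1 ∧
    (∀ x : ℕ → Bool, ∀ v ∈ closure s'.1, ∀ w ∈ closure s'.1,
        dist (s'.2.1 x • v) (s'.2.1 x • w) ≤ (1 / 2 : ℝ) ^ (n + 1)) ∧
    (∀ x y : ℕ → Bool, ∀ v ∈ closure s'.1, ∀ w ∈ closure s'.1,
        (s.2.1 x • v, s.2.1 y • s'.2.2 • w) ∉ F n)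
  have hstep : ∀ n s, inv n s → ∃ s', inv (n + 1) s' ∧ R n s s' := by
    rintro n ⟨V, T, gold⟩ ⟨hVo, hVne, hTdep⟩
    have hfin : (Set.range T).Finite := by
      have hsub : Set.range T ⊆
          (fun s : Fin n → Bool => T (fun i => if h : i < n then s ⟨i, h⟩ else false)) ''
            Set.univ := by
        rintro _ ⟨x, rfl⟩
        refine ⟨fun i => x i, Set.mem_univ _, ?_⟩
        refine hTdep _ _ (fun i hi => ?_)
        simp [hi]
      exact (Set.finite_univ.image _).subset hsub
    obtain ⟨g, V', hV'o, hV'ne, hcl, hgcl, hdiam, hsep⟩ :=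
      bk_step x₀ hx₀ (F n) (hFc n) (hFi n) V hVo hVne hfin.toFinset
        ((1 / 2 : ℝ) ^ (n + 1)) (by positivity)
    refine ⟨(V', fun x => T x * (if x n then g else 1), g),
      ⟨hV'o, hV'ne, ?_⟩, fun x => rfl, hcl, hgcl, ?_, ?_⟩
    · intro x y hxy
      have h1 : T x = T y := hTdep x y (fun i hi => hxy i (Nat.lt_succ_of_lt hi))
      show T x * (if x n then g else 1) = T y * (if y n then g else 1)
      rw [h1, hxy n (Nat.lt_succ_self n)]
    · intro x v hv w hw
      exact hdiam (T x) (hfin.mem_toFinset.mpr (Set.mem_range_self x)) (x n) v hv w hw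
    · intro x y v hv w hw
      exact hsep (T x) (hfin.mem_toFinset.mpr (Set.mem_range_self x))
        (T y) (hfin.mem_toFinset.mpr (Set.mem_range_self y)) v hv w hw
  obtain ⟨St, _, hinv, hR⟩ := bk_depChoice inv R (Set.univ, fun _ => (1 : G), (1 : G))
    ⟨isOpen_univ, ⟨x₀, Set.mem_univ _⟩, fun _ _ _ => rfl⟩ hstep
  set V : ℕ → Set X := fun n => (St n).1 with hV
  set T : ℕ → (ℕ → Bool) → G := fun n => (St n).2.1 with hT
  set g : ℕ → G := fun n => (St (n + 1)).2.2 with hg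
  have hTsucc : ∀ n x, T (n + 1) x = T n x * (if x n then g n else 1) := fun n => (hR n).1
  have hcl : ∀ n, closure (V (n + 1)) ⊆ V n := fun n => (hR n).2.1
  have hgcl : ∀ n, closure (g n • V (n + 1)) ⊆ V n := fun n => (hR n).2.2.1
  have hdiam : ∀ n, ∀ x : ℕ → Bool, ∀ v ∈ closure (V (n + 1)), ∀ w ∈ closure (V (n + 1)),
      dist (T (n + 1) x • v) (T (n + 1) x • w) ≤ (1 / 2 : ℝ) ^ (n + 1) :=
    fun n => (hR n).2.2.2.1
  have hsep : ∀ n, ∀ x y : ℕ → Bool, ∀ v ∈ closure (V (n + 1)), ∀ w ∈ closure (V (n + 1)),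
      (T n x • v, T n y • g n • w) ∉ F n := fun n => (hR n).2.2.2.2
  have hVne : ∀ n, (V n).Nonempty := fun n => (hinv n).2.1
  have hTdep : ∀ n, ∀ x y : ℕ → Bool, (∀ i < n, x i = y i) → T n x = T n y :=
    fun n => (hinv n).2.2
  -- L1: common tail factor
  have L1 : ∀ n m : ℕ, n ≤ m → ∀ x y : ℕ → Bool, (∀ i, n ≤ i → x i = y i) →
      T n y * (T n x)⁻¹ * T m x = T m y := by
    intro n m hnm
    induction m, hnm using Nat.le_induction with
    | base => intro x y _; exact inv_mul_cancel_right _ _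
    | succ m hm ih =>
        intro x y hxy
        rw [hTsucc m x, hTsucc m y, ← mul_assoc, ih x y hxy, hxy m hm]
  -- L2: nesting of translated sets
  have L2 : ∀ n m : ℕ, n ≤ m → ∀ x : ℕ → Bool, ∀ v ∈ closure (V m),
      ((T n x)⁻¹ * T m x) • v ∈ closure (V n) := by
    intro n m hnm
    induction m, hnm using Nat.le_induction with
    | base =>
        intro x v hv
        have h1 : (T n x)⁻¹ * T n x = 1 := by group
        rw [h1, one_smul]
        exact hv
    | succ m hm ih =>
        intro x v hv
        have hw : (if x m then g m else 1) • v ∈ closure (V m) := by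
          cases hxm : x m with
          | false =>
              simp only [hxm, Bool.false_eq_true, if_false, one_smul]
              exact subset_closure (hcl m hv)
          | true =>
              simp only [hxm, if_true]
              have hmem : g m • v ∈ g m • closure (V (m + 1)) := Set.smul_mem_smul_set hv
              rw [← closure_smul] at hmem
              exact subset_closure (hgcl m hmem)
        have hih := ih x _ hw
        rw [hTsucc m x, ← mul_assoc, mul_smul]
        exact hih
  choose c hc using hVne
  set q : (ℕ → Bool) → ℕ → X := fun x n => T n x • c n with hq
  have L3 : ∀ n m : ℕ, n ≤ m → ∀ x : ℕ → Bool,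
      ∃ v ∈ closure (V n), q x m = T n x • v := by
    intro n m hnm x
    refine ⟨((T n x)⁻¹ * T m x) • c m, L2 n m hnm x _ (subset_closure (hc m)), ?_⟩
    rw [smul_smul]
    group
    rfl
  have Ldist : ∀ (n : ℕ) (x : ℕ → Bool), ∀ m ≥ n + 1, ∀ m' ≥ n + 1,
      dist (q x m) (q x m') ≤ (1 / 2 : ℝ) ^ (n + 1) := by
    intro n x m hm m' hm'
    obtain ⟨v, hv, hqv⟩ := L3 (n + 1) m hm x
    obtain ⟨w, hw, hqw⟩ := L3 (n + 1) m' hm' x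
    rw [hqv, hqw]
    exact hdiam n x v hv w hw
  have hCauchy : ∀ x, CauchySeq (q x) := by
    intro x
    rw [Metric.cauchySeq_iff']
    intro ε hε
    obtain ⟨k, hk⟩ := exists_pow_lt_of_lt_one hε (by norm_num : (1 / 2 : ℝ) < 1)
    refine ⟨k + 1, fun m hm => ?_⟩
    calc dist (q x m) (q x (k + 1)) ≤ (1 / 2 : ℝ) ^ (k + 1) :=
          Ldist k x m hm (k + 1) le_rfl
      _ ≤ (1 / 2 : ℝ) ^ k := pow_le_pow_of_le_one (by norm_num) (by norm_num) (Nat.le_succ k)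
      _ < ε := hk
  set f : (ℕ → Bool) → X := fun x => limUnder atTop (q x) with hf
  have hlim : ∀ x, Tendsto (q x) atTop (𝓝 (f x)) := fun x => (hCauchy x).tendsto_limUnder
  have L5 : ∀ (n : ℕ) (x : ℕ → Bool), ∃ v ∈ closure (V n), f x = T n x • v := by
    intro n x
    have hclosed : IsClosed (T n x • closure (V n)) := isClosed_closure.smul (T n x)
    have hmem : f x ∈ T n x • closure (V n) := by
      refine hclosed.mem_of_tendsto (hlim x) ?_
      filter_upwards [eventually_ge_atTop n] with m hm
      obtain ⟨v, hv, hqv⟩ := L3 n m hm x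
      rw [hqv]
      exact Set.smul_mem_smul_set hv
    obtain ⟨v, hv, hvx⟩ := hmem
    exact ⟨v, hv, hvx.symm⟩
  have hfd : ∀ (n : ℕ) (x y : ℕ → Bool), (∀ i < n + 1, x i = y i) →
      dist (f x) (f y) ≤ (1 / 2 : ℝ) ^ (n + 1) := by
    intro n x y hxy
    obtain ⟨v, hv, hvx⟩ := L5 (n + 1) x
    obtain ⟨w, hw, hwy⟩ := L5 (n + 1) y
    have hTxy : T (n + 1) x = T (n + 1) y := hTdep (n + 1) x y hxy
    rw [hvx, hwy, hTxy]
    exact hdiam n y v hv w hw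
  have hfc : Continuous f := by
    rw [continuous_iff_continuousAt]
    intro x
    rw [ContinuousAt, Metric.tendsto_nhds]
    intro ε hε
    obtain ⟨k, hk⟩ := exists_pow_lt_of_lt_one hε (by norm_num : (1 / 2 : ℝ) < 1)
    have hnhds : {y : ℕ → Bool | ∀ i < k + 1, y i = x i} ∈ 𝓝 x := by
      have heq : {y : ℕ → Bool | ∀ i < k + 1, y i = x i} =
          ⋂ i ∈ Finset.range (k + 1), (fun y : ℕ → Bool => y i) ⁻¹' {x i} := by
        ext y
        simp [Finset.mem_range]
      rw [heq]
      refine (Filter.biInter_finset_mem _).mpr fun i _ => ?_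
      exact ((continuous_apply i).isOpen_preimage _ (isOpen_discrete _)).mem_nhds rfl
    filter_upwards [hnhds] with y hy
    calc dist (f y) (f x) ≤ (1 / 2 : ℝ) ^ (k + 1) := hfd k y x hy
      _ ≤ (1 / 2 : ℝ) ^ k := pow_le_pow_of_le_one (by norm_num) (by norm_num) (Nat.le_succ k)
      _ < ε := hk
  refine ⟨f, hfc, fun x y => ⟨?_, ?_⟩⟩
  · rintro ⟨n, hn⟩
    refine ⟨T n y * (T n x)⁻¹, ?_⟩
    have h1 : Tendsto (fun m => (T n y * (T n x)⁻¹) • q x m) atTop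
        (𝓝 ((T n y * (T n x)⁻¹) • f x)) := (hlim x).const_smul _
    have h2 : ∀ᶠ m in atTop, (T n y * (T n x)⁻¹) • q x m = q y m := by
      filter_upwards [eventually_ge_atTop n] with m hm
      show (T n y * (T n x)⁻¹) • (T m x • c m) = T m y • c m
      rw [smul_smul, L1 n m hm x y (fun i hi => hn i hi)]
    exact tendsto_nhds_unique (h1.congr' h2) (hlim y)
  · rintro ⟨g0, hg0⟩
    by_contra hE
    push_neg at hE
    obtain ⟨N, hN⟩ := hEF (f x, f y) ⟨g0, hg0⟩
    obtain ⟨m, hmN, hxym⟩ := hE N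
    have hFm : (f x, f y) ∈ F m := hFmono hmN hN
    obtain ⟨v, hv, hvx⟩ := L5 (m + 1) x
    obtain ⟨w, hw, hwy⟩ := L5 (m + 1) y
    rw [hTsucc m x] at hvx
    rw [hTsucc m y] at hwy
    cases hxm : x m <;> cases hym : y m
    · exact hxym (by rw [hxm, hym])
    · -- x m = false, y m = true
      rw [hxm] at hvx; rw [hym] at hwy
      simp only [Bool.false_eq_true, if_false, if_true, mul_one] at hvx hwy
      rw [mul_smul] at hwy
      refine hsep m x y v hv w hw ?_
      rw [← hvx, ← hwy]
      exact hFm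
    · -- x m = true, y m = false
      rw [hxm] at hvx; rw [hym] at hwy
      simp only [Bool.false_eq_true, if_false, if_true, mul_one] at hvx hwy
      rw [mul_smul] at hvx
      refine hsep m y x w hw v hv ?_
      have hswap : (f y, f x) ∈ F m := hFsym m _ hFm
      rw [← hvx, ← hwy]
      exact hswap
    · exact hxym (by rw [hxm, hym])

end BKMain

/-- Becker–Kechris: If a Polish group G acts continuously on a Polish
space X with a dense orbit and the orbit equivalence relation is meager in X × X,
then E₀ is Borel reducible to the orbit equivalence relation. -/
theorem stmt6 {G X : Type*} [Group G] [TopologicalSpace G] [IsTopologicalGroup G]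
    [PolishSpace G] [TopologicalSpace X] [PolishSpace X]
    [MeasurableSpace X] [BorelSpace X] [MulAction G X]
    (hcont : Continuous fun p : G × X => p.1 • p.2)
    (hdense : ∃ x : X, Dense (MulAction.orbit G x))
    (hmeager : IsMeagre {p : X × X | ∃ g : G, g • p.1 = p.2}) :
    ∃ f : (ℕ → Bool) → X, Measurable f ∧
      ∀ x y : ℕ → Bool, (∃ n, ∀ m ≥ n, x m = y m) ↔ ∃ g : G, g • f x = f y := by
  classical
  obtain ⟨x₀, hx₀⟩ := hdense
  haveI : ContinuousSMul G X := ⟨hcont⟩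
  letI := TopologicalSpace.upgradeIsCompletelyMetrizable X
  obtain ⟨S, hSnwd, hScount, hScov⟩ := isMeagre_iff_countable_union_isNowhereDense.mp hmeager
  have hSne : S.Nonempty := by
    by_contra h
    rw [Set.not_nonempty_iff_eq_empty] at h
    rw [h] at hScov
    have hmem : (x₀, x₀) ∈ {p : X × X | ∃ g : G, g • p.1 = p.2} := ⟨1, one_smul _ _⟩
    have := hScov hmem
    simp at this
  obtain ⟨e, he⟩ := hScount.exists_eq_range hSne
  set D : ℕ → Set (X × X) := fun j => closure (e j) ∪ Prod.swap ⁻¹' closure (e j) with hD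
  set F : ℕ → Set (X × X) := fun k => ⋃ j ∈ Finset.range (k + 1), D j with hF
  have hswapo : IsOpenMap (Prod.swap : X × X → X × X) :=
    (Homeomorph.prodComm X X).isOpenMap
  have hDc : ∀ j, IsClosed (D j) :=
    fun j => isClosed_closure.union (isClosed_closure.preimage continuous_swap)
  have hDi : ∀ j, interior (D j) = ∅ := by
    intro j
    have h1 : interior (closure (e j)) = ∅ := hSnwd (e j) (he ▸ Set.mem_range_self j)
    have h2 : interior (Prod.swap ⁻¹' closure (e j)) = ∅ :=
      bk_preimage_interior_empty hswapo h1
    exact bk_interior_union_empty isClosed_closure h1 h2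
  have hFc : ∀ k, IsClosed (F k) :=
    fun k => (bk_biUnion_closed_int_empty (Finset.range (k + 1)) D hDc hDi).1
  have hFi : ∀ k, interior (F k) = ∅ :=
    fun k => (bk_biUnion_closed_int_empty (Finset.range (k + 1)) D hDc hDi).2
  have hFsym : ∀ k, ∀ p ∈ F k, Prod.swap p ∈ F k := by
    intro k p hp
    rw [hF, Set.mem_iUnion₂] at hp ⊢
    obtain ⟨j, hj, hpD⟩ := hp
    refine ⟨j, hj, ?_⟩
    rcases hpD with hpc | hps
    · exact Or.inr (by simpa [Prod.swap_swap] using hpc)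
    · exact Or.inl hps
  have hFmono : Monotone F := by
    intro k k' hk p hp
    rw [hF, Set.mem_iUnion₂] at hp ⊢
    obtain ⟨j, hj, hpD⟩ := hp
    exact ⟨j, Finset.mem_range.mpr (lt_of_lt_of_le (Finset.mem_range.mp hj) (by omega)), hpD⟩
  have hEF : ∀ p : X × X, (∃ g : G, g • p.1 = p.2) → ∃ n, p ∈ F n := by
    intro p hp
    have := hScov hp
    rw [he] at this
    obtain ⟨s, ⟨j, rfl⟩, hps⟩ := this
    refine ⟨j, ?_⟩
    rw [hF, Set.mem_iUnion₂]
    exact ⟨j, Finset.self_mem_range_succ j, Or.inl (subset_closure hps)⟩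
  obtain ⟨f, hfc, hfiff⟩ := bk_key x₀ hx₀ F hFc hFi hFsym hFmono hEF
  exact ⟨f, hfc.measurable, hfiff⟩
end

section
/- Let π : G → R be a surjective group homomorphism with kernel contained in the center of G. If R is a perfect group, then the commutator subgroup [G,G] maps onto R under π, and [G,G] is itself perfect. -/
/-- If π : G → R is a surjective homomorphism with central kernel and R
is perfect, then [G,G] maps onto R and [G,G] is perfect. -/
theorem stmt8 {G R : Type*} [Group G] [Group R] (f : G →* R)
    (hsurj : Function.Surjective f) (hker : f.ker ≤ Subgroup.center G)
    (hperf : commutator R = ⊤) :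
    Subgroup.map f (commutator G) = ⊤ ∧
      ⁅commutator G, commutator G⁆ = commutator G := by
  have h1 : Subgroup.map f (commutator G) = ⊤ := by
    rw [commutator_def, Subgroup.map_commutator,
      Subgroup.map_top_of_surjective f hsurj, ← commutator_def, hperf]
  -- every g decomposes as c * z with c ∈ [G,G], z central
  have hdec : ∀ g : G, ∃ c ∈ commutator G, ∃ z ∈ Subgroup.center G, g = c * z := by
    intro g
    have : f g ∈ Subgroup.map f (commutator G) := by rw [h1]; trivial
    obtain ⟨c, hc, hfc⟩ := this
    refine ⟨c, hc, c⁻¹ * g, hker ?_, by group⟩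
    simp [MonoidHom.mem_ker, hfc]
  refine ⟨h1, le_antisymm ?_ ?_⟩
  · exact Subgroup.commutator_le.mpr fun a ha b hb =>
      (commutator G).mul_mem ((commutator G).mul_mem ((commutator G).mul_mem ha hb)
        ((commutator G).inv_mem ha)) ((commutator G).inv_mem hb)
  · rw [commutator_def]
    refine Subgroup.commutator_le.mpr fun g₁ _ g₂ _ => ?_
    obtain ⟨c₁, hc₁, z₁, hz₁, rfl⟩ := hdec g₁
    obtain ⟨c₂, hc₂, z₂, hz₂, rfl⟩ := hdec g₂
    have e₁ : ∀ a : G, z₁ * a = a * z₁ := fun a => (Subgroup.mem_center_iff.mp hz₁ a).symm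
    have e₂ : ∀ a : G, z₂ * a = a * z₂ := fun a => (Subgroup.mem_center_iff.mp hz₂ a).symm
    have e₁' : ∀ a : G, z₁⁻¹ * a = a * z₁⁻¹ := fun a =>
      (Commute.inv_left (e₁ a : Commute z₁ a) : _)
    have e₂' : ∀ a : G, z₂⁻¹ * a = a * z₂⁻¹ := fun a =>
      (Commute.inv_left (e₂ a : Commute z₂ a) : _)
    open scoped commutatorElement in
    have key : ⁅c₁ * z₁, c₂ * z₂⁆ = ⁅c₁, c₂⁆ := by
      simp only [commutatorElement_def, mul_inv_rev]
      calc c₁ * z₁ * (c₂ * z₂) * (z₁⁻¹ * c₁⁻¹) * (z₂⁻¹ * c₂⁻¹)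
          = c₁ * (z₁ * c₂) * z₂ * z₁⁻¹ * c₁⁻¹ * (z₂⁻¹ * c₂⁻¹) := by group
        _ = c₁ * (c₂ * z₁) * z₂ * z₁⁻¹ * c₁⁻¹ * (c₂⁻¹ * z₂⁻¹) := by
              rw [e₁ c₂, e₂' c₂⁻¹]
        _ = c₁ * c₂ * ((z₁ * z₂) * z₁⁻¹) * c₁⁻¹ * c₂⁻¹ * z₂⁻¹ := by group
        _ = c₁ * c₂ * (z₁⁻¹ * (z₁ * z₂)) * c₁⁻¹ * c₂⁻¹ * z₂⁻¹ := by
              rw [e₁' (z₁ * z₂)]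
        _ = c₁ * c₂ * (z₂ * c₁⁻¹) * c₂⁻¹ * z₂⁻¹ := by group
        _ = c₁ * c₂ * (c₁⁻¹ * z₂) * c₂⁻¹ * z₂⁻¹ := by rw [e₂ c₁⁻¹]
        _ = c₁ * c₂ * c₁⁻¹ * (z₂ * c₂⁻¹) * z₂⁻¹ := by group
        _ = c₁ * c₂ * c₁⁻¹ * (c₂⁻¹ * z₂) * z₂⁻¹ := by rw [e₂ c₂⁻¹]
        _ = c₁ * c₂ * c₁⁻¹ * c₂⁻¹ := by group
    rw [key]
    exact Subgroup.commutator_mem_commutator hc₁ hc₂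
end

section
/- Let X be a Polish space and Y a compact metric space. Let C ⊆ X × Y be a closed set whose projection to X is all of X, and such that the vertical section C_x = {y : (x,y) ∈ C} is countable for every x ∈ X. Then there exist Borel sets B_n ⊆ X (n ∈ ℕ) covering X and a function f : X → Y with f(x) ∈ C_x for every x, such that the restriction of f to each B_n is continuous. -/
open Filter Set Metric Topology

/-- A closed subset of X × Y (X Polish, Y compact metric) with full
projection to X and countable vertical sections admits a countably continuous
uniformization: a selector f continuous on each piece of a countable Borel cover. -/
theorem stmt11 {X Y : Type*} [TopologicalSpace X] [PolishSpace X]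
    [MeasurableSpace X] [BorelSpace X]
    [MetricSpace Y] [CompactSpace Y]
    (C : Set (X × Y)) (hC : IsClosed C)
    (hproj : ∀ x : X, ∃ y, (x, y) ∈ C)
    (hctble : ∀ x : X, {y | (x, y) ∈ C}.Countable) :
    ∃ B : ℕ → Set X, (∀ n, MeasurableSet (B n)) ∧ (⋃ n, B n) = Set.univ ∧
      ∃ f : X → Y, (∀ x, (x, f x) ∈ C) ∧ ∀ n, ContinuousOn f (B n) := by
  classical
  by_cases hY : Nonempty Y
  swap
  · have hX : IsEmpty X := ⟨fun x => hY ⟨(hproj x).choose⟩⟩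
    exact ⟨fun _ => Set.univ, fun _ => MeasurableSet.univ, Set.iUnion_const _,
      fun x => isEmptyElim x, fun x => isEmptyElim x, fun n x hx => isEmptyElim x⟩
  obtain ⟨u, hu⟩ := TopologicalSpace.exists_dense_seq Y
  -- the basic closed balls
  set D : ℕ → Set Y := fun n => Metric.closedBall (u n.unpair.1) (1 / (n.unpair.2 + 1)) with hD
  have hDclosed : ∀ n, IsClosed (D n) := fun n => Metric.isClosed_closedBall
  -- vertical sections
  set K : X → Set Y := fun x => {y | (x, y) ∈ C} with hKdef
  have hKclosed : ∀ x, IsClosed (K x) := fun x =>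
    hC.preimage (by fun_prop : Continuous fun y : Y => (x, y))
  set A : ℕ → Set X := fun n => {x | ∃ y, K x ∩ D n = {y}} with hA
  -- the A n cover X
  have cover : ∀ x, ∃ n, x ∈ A n := by
    intro x
    have hne : (K x).Nonempty := hproj x
    have hiso : ∃ y ∈ K x, ¬ AccPt y (Filter.principal (K x)) := by
      by_contra h
      push_neg at h
      have hperf : Perfect (K x) := ⟨hKclosed x, fun y hy => h y hy⟩
      obtain ⟨g, hgr, -, hginj⟩ := hperf.exists_nat_bool_injection hne
      have hcnt : (Set.range g).Countable := (hctble x).mono hgr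
      have h1 : Countable (ℕ → Bool) := by
        have := hcnt.to_subtype
        exact Countable.of_equiv _ (Equiv.ofInjective g hginj).symm
      have h2 : Countable (Set ℕ) :=
        Countable.of_equiv _ (Equiv.arrowCongr (Equiv.refl ℕ) Equiv.propEquivBool).symm
      obtain ⟨f0, hf0⟩ := h2.exists_injective_nat
      exact Function.cantor_injective f0 hf0
    obtain ⟨y, hyK, hyacc⟩ := hiso
    rw [accPt_iff_nhds] at hyacc
    push_neg at hyacc
    obtain ⟨U, hU, hUsub⟩ := hyacc
    obtain ⟨ε, hε, hball⟩ := Metric.mem_nhds_iff.mp hU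
    obtain ⟨j, hj⟩ := exists_nat_gt (2 / ε)
    have hjpos : (0:ℝ) < 1 / ((j:ℝ) + 1) := by positivity
    have hj2 : 2 / ((j:ℝ) + 1) < ε := by
      rw [div_lt_iff₀ (by positivity : (0:ℝ) < (j:ℝ) + 1)]
      rw [div_lt_iff₀ hε] at hj
      nlinarith [hε.le]
    obtain ⟨i, hi⟩ := Metric.denseRange_iff.mp hu y (1 / ((j:ℝ) + 1)) hjpos
    refine ⟨Nat.pair i j, y, ?_⟩
    have hDn : D (Nat.pair i j) = Metric.closedBall (u i) (1 / ((j:ℝ) + 1)) := by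
      simp [hD, Nat.unpair_pair]
    apply Set.eq_singleton_iff_unique_mem.mpr
    refine ⟨⟨hyK, ?_⟩, ?_⟩
    · rw [hDn]; exact Metric.mem_closedBall.mpr hi.le
    · rintro z ⟨hzK, hzD⟩
      rw [hDn] at hzD
      have hzy : dist z y < ε := by
        have h1 : dist z (u i) ≤ 1 / ((j:ℝ) + 1) := hzD
        have h2 : dist (u i) y < 1 / ((j:ℝ) + 1) := by rw [dist_comm]; exact hi
        calc dist z y ≤ dist z (u i) + dist (u i) y := dist_triangle _ _ _
          _ < 2 / ((j:ℝ) + 1) := by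
              have h3 : 2 / ((j:ℝ) + 1) = 1 / ((j:ℝ) + 1) + 1 / ((j:ℝ) + 1) := by ring
              linarith
          _ < ε := hj2
      exact hUsub z ⟨hball (Metric.mem_ball.mpr hzy), hzK⟩
  -- measurability of the A n
  have hAmeas : ∀ n, MeasurableSet (A n) := by
    intro n
    have hP : IsClosed (Prod.fst '' (C ∩ (Set.univ ×ˢ D n))) :=
      isClosedMap_fst_of_compactSpace _ (hC.inter (isClosed_univ.prod (hDclosed n)))
    have hT : ∀ m : ℕ, IsClosed (Prod.fst ''
        {p : X × (Y × Y) | (p.1, p.2.1) ∈ C ∧ (p.1, p.2.2) ∈ C ∧ p.2.1 ∈ D n ∧ p.2.2 ∈ D n ∧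
          1 / ((m:ℝ) + 1) ≤ dist p.2.1 p.2.2}) := by
      intro m
      apply isClosedMap_fst_of_compactSpace
      have c1 : Continuous fun p : X × (Y × Y) => (p.1, p.2.1) := by fun_prop
      have c2 : Continuous fun p : X × (Y × Y) => (p.1, p.2.2) := by fun_prop
      have c3 : Continuous fun p : X × (Y × Y) => p.2.1 := by fun_prop
      have c4 : Continuous fun p : X × (Y × Y) => p.2.2 := by fun_prop
      have c5 : Continuous fun p : X × (Y × Y) => dist p.2.1 p.2.2 := by fun_prop
      exact (hC.preimage c1).inter ((hC.preimage c2).inter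
        (((hDclosed n).preimage c3).inter (((hDclosed n).preimage c4).inter
        (isClosed_le continuous_const c5))))
    have hAeq : A n = (Prod.fst '' (C ∩ (Set.univ ×ˢ D n))) \
        (⋃ m : ℕ, Prod.fst '' {p : X × (Y × Y) | (p.1, p.2.1) ∈ C ∧ (p.1, p.2.2) ∈ C ∧
          p.2.1 ∈ D n ∧ p.2.2 ∈ D n ∧ 1 / ((m:ℝ) + 1) ≤ dist p.2.1 p.2.2}) := by
      ext x
      simp only [hA, Set.mem_setOf_eq, Set.mem_diff]
      constructor
      · rintro ⟨y, hy⟩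
        have hyK : y ∈ K x ∩ D n := by rw [hy]; rfl
        refine ⟨⟨(x, y), ⟨hyK.1, Set.mem_univ x, hyK.2⟩, rfl⟩, ?_⟩
        intro hmem
        rw [Set.mem_iUnion] at hmem
        obtain ⟨m, ⟨x', y1, y2⟩, ⟨h1, h2, h3, h4, h5⟩, (rfl : x' = x)⟩ := hmem
        have e1 : y1 = y := by
          have h6 : y1 ∈ K x' ∩ D n := ⟨h1, h3⟩
          rwa [hy, Set.mem_singleton_iff] at h6
        have e2 : y2 = y := by
          have h6 : y2 ∈ K x' ∩ D n := ⟨h2, h4⟩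
          rwa [hy, Set.mem_singleton_iff] at h6
        rw [e1, e2, dist_self] at h5
        have hpos : (0:ℝ) < 1 / ((m:ℝ) + 1) := by positivity
        linarith
      · rintro ⟨⟨⟨x', y⟩, ⟨hpC, -, hpD⟩, (rfl : x' = x)⟩, hnot⟩
        refine ⟨y, Set.eq_singleton_iff_unique_mem.mpr ⟨⟨hpC, hpD⟩, ?_⟩⟩
        rintro z ⟨hzK, hzD⟩
        by_contra hzy
        have hd : (0:ℝ) < dist z y := dist_pos.mpr hzy
        obtain ⟨m, hm⟩ := exists_nat_gt (1 / dist z y)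
        have hmd : 1 / ((m:ℝ) + 1) ≤ dist z y := by
          rw [div_le_iff₀ (by positivity : (0:ℝ) < (m:ℝ) + 1)]
          rw [div_lt_iff₀ hd] at hm
          nlinarith [hd.le]
        apply hnot
        rw [Set.mem_iUnion]
        exact ⟨m, (x', (z, y)), ⟨hzK, hpC, hzD, hpD, hmd⟩, rfl⟩
    rw [hAeq]
    exact hP.measurableSet.diff
      (MeasurableSet.iUnion fun m => ((hT m).measurableSet))
  -- the selector
  have hsel : ∀ x, ∃ y, K x ∩ D (Nat.find (cover x)) = {y} := fun x => Nat.find_spec (cover x)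
  set f : X → Y := fun x => (hsel x).choose with hf
  have hfspec : ∀ x, K x ∩ D (Nat.find (cover x)) = {f x} := fun x => (hsel x).choose_spec
  have hfC : ∀ x, (x, f x) ∈ C := by
    intro x
    have h : f x ∈ K x ∩ D (Nat.find (cover x)) := by rw [hfspec x]; rfl
    exact h.1
  refine ⟨fun n => {x | Nat.find (cover x) = n}, ?_, ?_, f, hfC, ?_⟩
  · intro n
    show MeasurableSet {x | Nat.find (cover x) = n}
    have heq : {x | Nat.find (cover x) = n} = A n ∩ ⋂ m ∈ Set.Iio n, (A m)ᶜ := by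
      ext x
      simp only [Set.mem_setOf_eq, Set.mem_inter_iff, Set.mem_iInter, Set.mem_compl_iff,
        Set.mem_Iio]
      rw [Nat.find_eq_iff]
    rw [heq]
    exact (hAmeas n).inter (MeasurableSet.biInter (Set.to_countable _)
      fun m _ => (hAmeas m).compl)
  · ext x
    simp only [Set.mem_iUnion, Set.mem_setOf_eq, Set.mem_univ, iff_true]
    exact ⟨Nat.find (cover x), rfl⟩
  · intro n x hx
    have hxn : Nat.find (cover x) = n := hx
    have hxspec : K x ∩ D n = {f x} := by rw [← hxn]; exact hfspec x
    show Filter.Tendsto f (nhdsWithin x {x | Nat.find (cover x) = n}) (nhds (f x))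
    rw [Filter.tendsto_iff_ultrafilter]
    intro U hU
    have hUB : {x | Nat.find (cover x) = n} ∈ U := by
      have h1 : nhdsWithin x {x | Nat.find (cover x) = n} ≤
          Filter.principal {x | Nat.find (cover x) = n} := by
        rw [nhdsWithin]; exact inf_le_right
      exact Filter.le_principal_iff.mp (hU.trans h1)
    have hfD : ∀ᶠ z in (U : Filter X), f z ∈ D n := by
      filter_upwards [hUB] with z hz
      have hzspec : K z ∩ D n = {f z} := by
        rw [← (hz : Nat.find (cover z) = n)]; exact hfspec z
      have : f z ∈ K z ∩ D n := by rw [hzspec]; rfl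
      exact this.2
    obtain ⟨y, -, hy⟩ := isCompact_univ.ultrafilter_le_nhds (U.map f)
      (Filter.le_principal_iff.mpr Filter.univ_mem)
    have htf : Filter.Tendsto f (U : Filter X) (nhds y) := by
      rw [Filter.Tendsto, ← Ultrafilter.coe_map]; exact hy
    have hxid : Filter.Tendsto (fun z : X => z) (U : Filter X) (nhds x) :=
      tendsto_id.mono_right (hU.trans nhdsWithin_le_nhds)
    have hpair : Filter.Tendsto (fun z : X => (z, f z)) (U : Filter X) (nhds (x, y)) :=
      hxid.prodMk_nhds htf
    have hyC : (x, y) ∈ C :=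
      hC.mem_of_tendsto hpair (Filter.Eventually.of_forall fun z => hfC z)
    have hyD : y ∈ D n := (hDclosed n).mem_of_tendsto htf hfD
    have hyfx : y = f x := by
      have : y ∈ K x ∩ D n := ⟨hyC, hyD⟩
      rwa [hxspec, Set.mem_singleton_iff] at this
    rwa [hyfx] at htf
end

section
/- Let X be a Polish space, Y a compact metric space, C ⊆ X × Y closed with all vertical sections C_x countable, and let D ⊆ Y be a closed set. Then the set A = {x ∈ X : C_x ∩ D has exactly one point} is a G_δ subset of X. -/
/-- For C ⊆ X × Y closed with countable vertical sections (X Polish, Y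
compact metric) and D ⊆ Y closed, the set of x such that C_x ∩ D has exactly one
point is G_δ. -/
theorem stmt12 {X Y : Type*} [TopologicalSpace X] [PolishSpace X]
    [MetricSpace Y] [CompactSpace Y]
    (C : Set (X × Y)) (hC : IsClosed C)
    (hctble : ∀ x : X, {y | (x, y) ∈ C}.Countable)
    (D : Set Y) (hD : IsClosed D) :
    IsGδ {x : X | ∃! y, y ∈ {y | (x, y) ∈ C} ∩ D} := by
  letI := TopologicalSpace.upgradeIsCompletelyMetrizable X
  -- F = C ∩ (X × D)
  set F : Set (X × Y) := {p | p ∈ C ∧ p.2 ∈ D} with hF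
  have hFc : IsClosed F := hC.inter (hD.preimage continuous_snd)
  -- nonemptiness set
  set N : Set X := Prod.fst '' F with hN
  have hNc : IsClosed N := isClosedMap_fst_of_compactSpace F hFc
  -- Gₙ : pairs of far-apart points
  set G : ℕ → Set (X × Y × Y) := fun n =>
    {p | (p.1, p.2.1) ∈ F ∧ (p.1, p.2.2) ∈ F ∧ 1 / (n + 1 : ℝ) ≤ dist p.2.1 p.2.2} with hG
  have hGc : ∀ n, IsClosed (G n) := by
    intro n
    refine IsClosed.inter (hFc.preimage (by fun_prop)) (IsClosed.inter (hFc.preimage (by fun_prop)) ?_)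
    exact isClosed_le continuous_const (continuous_snd.fst.dist continuous_snd.snd)
  set K : ℕ → Set X := fun n => Prod.fst '' G n with hK
  have hKc : ∀ n, IsClosed (K n) := fun n => isClosedMap_fst_of_compactSpace _ (hGc n)
  have key : {x : X | ∃! y, y ∈ {y | (x, y) ∈ C} ∩ D} = N ∩ ⋂ n, (K n)ᶜ := by
    ext x
    constructor
    · rintro ⟨y, ⟨hyC, hyD⟩, huniq⟩
      refine ⟨⟨(x, y), ⟨hyC, hyD⟩, rfl⟩, Set.mem_iInter.2 fun n ⟨p, ⟨h1, h2, h3⟩, hp⟩ => ?_⟩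
      subst hp
      have e1 := huniq p.2.1 ⟨h1.1, h1.2⟩
      have e2 := huniq p.2.2 ⟨h2.1, h2.2⟩
      rw [e1, e2, dist_self] at h3
      have : (0:ℝ) < 1 / (n + 1 : ℝ) := by positivity
      linarith
    · rintro ⟨⟨p, ⟨hpC, hpD⟩, hp⟩, hsub⟩
      subst hp
      refine ⟨p.2, ⟨hpC, hpD⟩, fun z ⟨hzC, hzD⟩ => ?_⟩
      by_contra hne
      have hd : 0 < dist z p.2 := dist_pos.2 hne
      obtain ⟨n, hn⟩ := exists_nat_one_div_lt hd
      exact (Set.mem_iInter.1 hsub n)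
        ⟨(p.1, z, p.2), ⟨⟨hzC, hzD⟩, ⟨hpC, hpD⟩, le_of_lt hn⟩, rfl⟩
  rw [key]
  exact hNc.isGδ.inter (IsGδ.iInter fun n => (hKc n).isOpen_compl.isGδ)
end

section
/- Let X and Y be compact Hausdorff spaces and let E, F be equivalence relations on X, Y respectively. Suppose C ⊆ X × Y is a closed set that projects onto both X and Y and satisfies: for all (x,y), (x',y') ∈ C, x E x' if and only if y F y'. If E is a closed subset of X × X, then F is a closed subset of Y × Y. -/
/-- If C is a closed subset of X × Y (compact Hausdorff spaces)
projecting onto both factors with: (x,y),(x',y') ∈ C → (x E x' ↔ y F y'), and E is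
closed, then F is closed. -/
theorem stmt13 {X Y : Type*} [TopologicalSpace X] [CompactSpace X] [T2Space X]
    [TopologicalSpace Y] [CompactSpace Y] [T2Space Y]
    (E : X → X → Prop) (F : Y → Y → Prop) (hE : Equivalence E) (hF : Equivalence F)
    (C : Set (X × Y)) (hC : IsClosed C)
    (hprojX : ∀ x, ∃ y, (x, y) ∈ C) (hprojY : ∀ y, ∃ x, (x, y) ∈ C)
    (hcompat : ∀ x y x' y', (x, y) ∈ C → (x', y') ∈ C → (E x x' ↔ F y y'))
    (hEclosed : IsClosed {p : X × X | E p.1 p.2}) :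
    IsClosed {p : Y × Y | F p.1 p.2} := by
  have hK : IsClosed {q : (X × Y) × (X × Y) | q.1 ∈ C ∧ q.2 ∈ C ∧ E q.1.1 q.2.1} := by
    apply IsClosed.inter (hC.preimage continuous_fst)
    apply IsClosed.inter (hC.preimage continuous_snd)
    exact hEclosed.preimage ((continuous_fst.fst).prodMk (continuous_snd.fst))
  have hKc : IsCompact {q : (X × Y) × (X × Y) | q.1 ∈ C ∧ q.2 ∈ C ∧ E q.1.1 q.2.1} :=
    hK.isCompact
  have himg : {p : Y × Y | F p.1 p.2} =
      (fun q : (X × Y) × (X × Y) => (q.1.2, q.2.2)) ''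
        {q | q.1 ∈ C ∧ q.2 ∈ C ∧ E q.1.1 q.2.1} := by
    ext ⟨y, y'⟩
    constructor
    · intro h
      obtain ⟨x, hx⟩ := hprojY y
      obtain ⟨x', hx'⟩ := hprojY y'
      exact ⟨((x, y), (x', y')), ⟨hx, hx', (hcompat x y x' y' hx hx').2 h⟩, rfl⟩
    · rintro ⟨⟨⟨x, yy⟩, ⟨x', yy'⟩⟩, ⟨h1, h2, h3⟩, heq⟩
      simp only [Prod.mk.injEq] at heq
      obtain ⟨rfl, rfl⟩ := heq
      exact (hcompat _ _ _ _ h1 h2).1 h3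
  rw [himg]
  exact (hKc.image ((continuous_fst.snd).prodMk (continuous_snd.snd))).isClosed
end

section
/- Let X be a compact Polish space. There exists a Borel map d : F(X) → X, where F(X) is the space of closed subsets of X with the Vietoris topology, such that d(F) ∈ F for every non-empty closed set F ⊆ X. -/
open TopologicalSpace Metric Set Filter Topology

namespace Stmt16Aux

variable {X : Type*} [MetricSpace X] [CompactSpace X]

lemma isClosed_hits (C : Set X) (hC : IsClosed C) :
    IsClosed {F : NonemptyCompacts X | ((F : Set X) ∩ C).Nonempty} := by
  refine IsSeqClosed.isClosed ?_
  intro Fj F hFj hlim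
  choose x hx1 hx2 using hFj
  obtain ⟨x₀, φ, hφ, hxlim⟩ := CompactSpace.tendsto_subseq x
  have hx₀C : x₀ ∈ C := hC.mem_of_tendsto hxlim (Eventually.of_forall fun j => hx2 _)
  have hne : ∀ j, EMetric.hausdorffEdist ((Fj (φ j) : Set X)) (F : Set X) ≠ ⊤ := fun j =>
    hausdorffEdist_ne_top_of_nonempty_of_bounded (Fj (φ j)).nonempty F.nonempty
      (Fj (φ j)).isCompact.isBounded F.isCompact.isBounded
  have h1 : Tendsto (fun j => infDist (x (φ j)) (F : Set X)) atTop (𝓝 (infDist x₀ (F : Set X))) :=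
    ((continuous_infDist_pt (F : Set X)).tendsto x₀).comp hxlim
  have h2 : ∀ j, infDist (x (φ j)) (F : Set X) ≤ dist (Fj (φ j)) F := fun j => by
    rw [NonemptyCompacts.dist_eq]
    exact infDist_le_hausdorffDist_of_mem (hx1 (φ j)) (hne j)
  have h3 : Tendsto (fun j => dist (Fj (φ j)) F) atTop (𝓝 0) :=
    (tendsto_iff_dist_tendsto_zero.1 hlim).comp hφ.tendsto_atTop
  have h4 : infDist x₀ (F : Set X) ≤ 0 := le_of_tendsto_of_tendsto' h1 h3 h2
  have hx₀F : x₀ ∈ (F : Set X) :=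
    (F.isCompact.isClosed.mem_iff_infDist_zero F.nonempty).2
      (le_antisymm h4 infDist_nonneg)
  exact ⟨x₀, hx₀F, hx₀C⟩

open Classical in
noncomputable def idx (u : ℕ → X) (s : Set X) (k : ℕ) : ℕ :=
  if h : ∃ n, (s ∩ closedBall (u n) ((1/2 : ℝ) ^ k)).Nonempty then Nat.find h else 0

noncomputable def G (u : ℕ → X) (F : NonemptyCompacts X) : ℕ → Set X
  | 0 => F
  | k + 1 => G u F k ∩ closedBall (u (idx u (G u F k) k)) ((1/2 : ℝ) ^ k)

noncomputable def I (u : ℕ → X) (F : NonemptyCompacts X) (k : ℕ) : ℕ := idx u (G u F k) k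

noncomputable def c (u : ℕ → X) (F : NonemptyCompacts X) (k : ℕ) : X := u (I u F k)

variable {u : ℕ → X}

lemma exists_idx (hu : DenseRange u) {s : Set X} (hs : s.Nonempty) (k : ℕ) :
    ∃ n, (s ∩ closedBall (u n) ((1/2 : ℝ) ^ k)).Nonempty := by
  obtain ⟨y, hy⟩ := hs
  obtain ⟨n, hn⟩ := denseRange_iff.1 hu y ((1/2 : ℝ) ^ k) (by positivity)
  exact ⟨n, y, hy, mem_closedBall.2 hn.le⟩

lemma idx_spec (hu : DenseRange u) {s : Set X} (hs : s.Nonempty) (k : ℕ) :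
    (s ∩ closedBall (u (idx u s k)) ((1/2 : ℝ) ^ k)).Nonempty := by
  classical
  rw [idx, dif_pos (exists_idx hu hs k)]
  exact Nat.find_spec (exists_idx hu hs k)

lemma G_subset (F : NonemptyCompacts X) : ∀ k, G u F k ⊆ (F : Set X)
  | 0 => subset_rfl
  | k + 1 => inter_subset_left.trans (G_subset F k)

lemma G_succ_subset (F : NonemptyCompacts X) (k : ℕ) : G u F (k + 1) ⊆ G u F k :=
  inter_subset_left

lemma G_nonempty (hu : DenseRange u) (F : NonemptyCompacts X) : ∀ k, (G u F k).Nonempty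
  | 0 => F.nonempty
  | k + 1 => idx_spec hu (G_nonempty hu F k) k

lemma dist_c (F : NonemptyCompacts X) (k : ℕ) {z : X} (hz : z ∈ G u F (k + 1)) :
    dist z (c u F k) ≤ (1/2 : ℝ) ^ k :=
  mem_closedBall.1 hz.2

lemma cauchy_c (hu : DenseRange u) (F : NonemptyCompacts X) : CauchySeq (c u F) := by
  apply cauchySeq_of_le_geometric (1/2 : ℝ) 2 (by norm_num)
  intro k
  obtain ⟨z, hz⟩ := G_nonempty hu F (k + 2)
  have hz1 : z ∈ G u F (k + 1) := G_succ_subset F (k + 1) hz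
  calc dist (c u F k) (c u F (k + 1))
      ≤ dist (c u F k) z + dist z (c u F (k + 1)) := dist_triangle _ _ _
    _ ≤ (1/2 : ℝ) ^ k + (1/2 : ℝ) ^ (k + 1) := by
        refine add_le_add ?_ (dist_c F (k + 1) hz)
        rw [dist_comm]; exact dist_c F k hz1
    _ ≤ 2 * (1/2 : ℝ) ^ k := by ring_nf; nlinarith [pow_pos (by norm_num : (0:ℝ) < 1/2) k]

variable [Nonempty X]

noncomputable def dd (u : ℕ → X) (F : NonemptyCompacts X) : X := limUnder atTop (c u F)

lemma tendsto_c (hu : DenseRange u) (F : NonemptyCompacts X) :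
    Tendsto (c u F) atTop (𝓝 (dd u F)) :=
  (cauchy_c hu F).tendsto_limUnder

lemma dd_mem (hu : DenseRange u) (F : NonemptyCompacts X) : dd u F ∈ (F : Set X) := by
  choose z hz using fun k => G_nonempty hu F (k + 1)
  have hzF : ∀ k, z k ∈ (F : Set X) := fun k => G_subset F (k + 1) (hz k)
  have hzc : ∀ k, dist (z k) (c u F k) ≤ (1/2 : ℝ) ^ k := fun k => dist_c F k (hz k)
  have hten : Tendsto z atTop (𝓝 (dd u F)) := by
    rw [tendsto_iff_dist_tendsto_zero]
    have hg : Tendsto (fun k => (1/2 : ℝ) ^ k + dist (c u F k) (dd u F)) atTop (𝓝 0) := by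
      have := (tendsto_pow_atTop_nhds_zero_of_lt_one (by norm_num : (0:ℝ) ≤ 1/2)
        (by norm_num : (1/2 : ℝ) < 1)).add (tendsto_iff_dist_tendsto_zero.1 (tendsto_c hu F))
      simpa using this
    refine squeeze_zero (fun k => dist_nonneg) (fun k => ?_) hg
    exact (dist_triangle (z k) (c u F k) (dd u F)).trans (add_le_add_left (hzc k) _)
  exact F.isCompact.isClosed.mem_of_tendsto hten (Eventually.of_forall hzF)

/-! Measurability -/

noncomputable def Cs (u : ℕ → X) (σ : ℕ → ℕ) : ℕ → Set X
  | 0 => univ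
  | k + 1 => Cs u σ k ∩ closedBall (u (σ k)) ((1/2 : ℝ) ^ k)

lemma isClosed_Cs (σ : ℕ → ℕ) : ∀ k, IsClosed (Cs u σ k)
  | 0 => isClosed_univ
  | k + 1 => (isClosed_Cs σ k).inter isClosed_closedBall

lemma G_eq_on_E (F : NonemptyCompacts X) (σ : ℕ → ℕ) :
    ∀ k, (∀ j < k, I u F j = σ j) → G u F k = (F : Set X) ∩ Cs u σ k := by
  intro k
  induction k with
  | zero => intro _; simp [G, Cs]
  | succ k ih =>
    intro h
    have hk : G u F k = (F : Set X) ∩ Cs u σ k := ih fun j hj => h j (hj.trans (Nat.lt_succ_self k))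
    have hIk : idx u (G u F k) k = σ k := h k (Nat.lt_succ_self k)
    show G u F k ∩ closedBall (u (idx u (G u F k) k)) ((1/2 : ℝ) ^ k) = _
    rw [hIk, hk, Cs, inter_assoc]

def E (u : ℕ → X) (σ : ℕ → ℕ) (k : ℕ) : Set (NonemptyCompacts X) :=
  {F | ∀ j < k, I u F j = σ j}

lemma I_eq_iff (hu : DenseRange u) (F : NonemptyCompacts X) (σ : ℕ → ℕ) (k n : ℕ)
    (hE : ∀ j < k, I u F j = σ j) :
    I u F k = n ↔
      (((F : Set X) ∩ (Cs u σ k ∩ closedBall (u n) ((1/2 : ℝ) ^ k))).Nonempty ∧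
        ∀ m < n, ¬ ((F : Set X) ∩ (Cs u σ k ∩ closedBall (u m) ((1/2 : ℝ) ^ k))).Nonempty) := by
  classical
  have hG : G u F k = (F : Set X) ∩ Cs u σ k := G_eq_on_E F σ k hE
  have hex : ∃ m, (G u F k ∩ closedBall (u m) ((1/2 : ℝ) ^ k)).Nonempty :=
    exists_idx hu (G_nonempty hu F k) k
  have hI : I u F k = Nat.find hex := by rw [I, idx, dif_pos hex]
  rw [hI, Nat.find_eq_iff hex]
  have hsets : ∀ m, G u F k ∩ closedBall (u m) ((1/2 : ℝ) ^ k) =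
      (F : Set X) ∩ (Cs u σ k ∩ closedBall (u m) ((1/2 : ℝ) ^ k)) := fun m => by
    rw [hG, inter_assoc]
  simp only [hsets]

variable [MeasurableSpace (NonemptyCompacts X)] [BorelSpace (NonemptyCompacts X)]

lemma measurableSet_hits (C : Set X) (hC : IsClosed C) :
    MeasurableSet {F : NonemptyCompacts X | ((F : Set X) ∩ C).Nonempty} :=
  (isClosed_hits C hC).measurableSet

lemma measurableSet_E (hu : DenseRange u) (σ : ℕ → ℕ) :
    ∀ k, MeasurableSet (E u σ k) := by
  intro k
  induction k with
  | zero =>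
    have : E u σ 0 = univ := by ext F; simp [E]
    rw [this]; exact MeasurableSet.univ
  | succ k ih =>
    have hEq : E u σ (k + 1) = E u σ k ∩
        ({F : NonemptyCompacts X |
            ((F : Set X) ∩ (Cs u σ k ∩ closedBall (u (σ k)) ((1/2 : ℝ) ^ k))).Nonempty} ∩
          ⋂ m, ⋂ (_ : m < σ k),
            {F : NonemptyCompacts X |
              ((F : Set X) ∩ (Cs u σ k ∩ closedBall (u m) ((1/2 : ℝ) ^ k))).Nonempty}ᶜ) := by
      ext F
      simp only [E, mem_setOf_eq, mem_inter_iff, mem_iInter, mem_compl_iff]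
      constructor
      · intro h
        have hE : ∀ j < k, I u F j = σ j := fun j hj => h j (hj.trans (Nat.lt_succ_self k))
        have hk := (I_eq_iff hu F σ k (σ k) hE).1 (h k (Nat.lt_succ_self k))
        exact ⟨hE, hk.1, hk.2⟩
      · rintro ⟨hE, h1, h2⟩
        intro j hj
        rcases Nat.lt_succ_iff_lt_or_eq.1 hj with hj | rfl
        · exact hE j hj
        · exact (I_eq_iff hu F σ j (σ j) hE).2 ⟨h1, h2⟩
    rw [hEq]
    refine ih.inter (MeasurableSet.inter ?_ ?_)
    · exact measurableSet_hits _ ((isClosed_Cs σ k).inter isClosed_closedBall)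
    · exact MeasurableSet.iInter fun m => MeasurableSet.iInter fun _ =>
        (measurableSet_hits _ ((isClosed_Cs σ k).inter isClosed_closedBall)).compl

lemma measurable_I (hu : DenseRange u) (k : ℕ) : Measurable fun F => I u F k := by
  apply measurable_to_countable'
  intro n
  have hEq : (fun F => I u F k) ⁻¹' {n} =
      ⋃ t : Fin k → ℕ, E u (fun j => if h : j < k then t ⟨j, h⟩ else n) (k + 1) := by
    ext F
    simp only [mem_preimage, mem_singleton_iff, mem_iUnion]
    constructor
    · intro h
      refine ⟨fun j => I u F j, fun j hj => ?_⟩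
      rcases Nat.lt_succ_iff_lt_or_eq.1 hj with hj | rfl
      · simp [hj]
      · simp [h]
    · rintro ⟨t, ht⟩
      have := ht k (Nat.lt_succ_self k)
      simpa using this
  rw [hEq]
  exact MeasurableSet.iUnion fun t => measurableSet_E hu _ (k + 1)

lemma measurable_c [MeasurableSpace X] (hu : DenseRange u) (k : ℕ) : Measurable fun F => c u F k :=
  measurable_from_nat.comp (measurable_I hu k)

lemma measurable_dd [MeasurableSpace X] [BorelSpace X] (hu : DenseRange u) :
    Measurable (dd u) := by
  apply measurable_of_tendsto_metrizable (f := fun k F => c u F k)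
  · exact fun k => measurable_c hu k
  · rw [tendsto_pi_nhds]
    exact fun F => tendsto_c hu F

end Stmt16Aux

open TopologicalSpace

/-- For a compact Polish (here: compact metric) space X, there is a
Borel selector on the space of nonempty closed (= nonempty compact) subsets of X,
equipped with the Vietoris (= Hausdorff metric) topology. -/
theorem stmt16 {X : Type*} [MetricSpace X] [CompactSpace X]
    [MeasurableSpace X] [BorelSpace X] :
    ∃ d : NonemptyCompacts X → X,
      @Measurable _ _ (borel (NonemptyCompacts X)) _ d ∧
      ∀ F : NonemptyCompacts X, d F ∈ (F : Set X) := by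
  cases isEmpty_or_nonempty X with
  | inl h =>
    haveI : IsEmpty (NonemptyCompacts X) := ⟨fun F => h.elim F.nonempty.some⟩
    letI : MeasurableSpace (NonemptyCompacts X) := borel _
    exact ⟨fun F => F.nonempty.some, measurable_of_empty _, fun F => F.nonempty.some_mem⟩
  | inr h =>
    obtain ⟨u, hu⟩ := TopologicalSpace.exists_dense_seq X
    letI : MeasurableSpace (NonemptyCompacts X) := borel _
    haveI : BorelSpace (NonemptyCompacts X) := ⟨rfl⟩
    exact ⟨Stmt16Aux.dd u, Stmt16Aux.measurable_dd hu, Stmt16Aux.dd_mem hu⟩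
end
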